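/- Soundness of D-separation: let G be a finite DAG, W ⊆ vertices, and suppose Pr is the distribution induced by a Bayesian network on G in which each vertex of W has a {0,1}-valued CPT. If disjoint sets X and Y are d-separated by the functional closure Z* of Z in G, then X and Y are conditionally independent given Z under Pr. -/

import Mathlib

attribute [local instance] Classical.propDecidable

/-- `Act E Z a d b`: there is a `Z`-active (undirected) walk from `a` to `b` in the
digraph `E`, where `d` records whether the last edge points into `b`. -/
inductive Act {V : Type*} (E : V → V → Prop) (Z : Set V) : V → Bool → V → Prop where
  | into {a b : V} : E a b → Act E Z a true b
  | outof {a b : V} : E b a → Act E Z a false b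
  | step_out {a m c : V} {d : Bool} :
      Act E Z a d m → E m c → m ∉ Z → Act E Z a true c
  | step_in {a m c : V} {d : Bool} :
      Act E Z a d m → E c m →
      (d = true → ∃ w, Relation.ReflTransGen E m w ∧ w ∈ Z) →
      (d = false → m ∉ Z) → Act E Z a false c

/-- d-separation. -/
def DSep {V : Type*} (E : V → V → Prop) (Z : Set V) (X Y : Set V) : Prop :=
  ∀ x ∈ X, ∀ y ∈ Y, ¬ ∃ d, Act E Z x d y

/-- The functional closure of `Z` with respect to the functional vertices `W`. -/
def fclosure {V : Type*} (E : V → V → Prop) (W : Set V) (Z : Set V) : Set V :=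
  ⋂₀ {C : Set V | Z ⊆ C ∧ ∀ w ∈ W, (∀ p, E p w → p ∈ C) → w ∈ C}

/-- Marginal of `Pr` over the variables in `A`. -/
noncomputable def marg {ι : Type*} [Fintype ι] [DecidableEq ι]
    {S : ι → Type*} [∀ i, Fintype (S i)]
    (Pr : (∀ i, S i) → ℝ) (A : Finset ι) (v : ∀ i, S i) : ℝ :=
  ∑ u : ∀ i, S i, if (∀ j ∈ A, u j = v j) then Pr u else 0

set_option linter.unusedSectionVars false

section SumLemmas
variable {ι : Type*} [Fintype ι] [DecidableEq ι] {S : ι → Type*} [∀ i, Fintype (S i)]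

/-- `h` depends only on the coordinates in `A`. -/
def Dep (h : (∀ i, S i) → ℝ) (A : Finset ι) : Prop :=
  ∀ u w : ∀ i, S i, (∀ j ∈ A, u j = w j) → h u = h w

theorem ifeq {α : Sort*} {c d : Prop} {ic : Decidable c} {id : Decidable d} {a b : α}
    (h : c ↔ d) : (if c then a else b) = (if d then a else b) := by
  by_cases hc : c
  · rw [if_pos hc, if_pos (h.1 hc)]
  · rw [if_neg hc, if_neg (fun hd => hc (h.2 hd))]

theorem Dep.mono {h : (∀ i, S i) → ℝ} {A B : Finset ι} (hd : Dep h A) (hAB : A ⊆ B) :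
    Dep h B := fun u w hu => hd u w fun j hj => hu j (hAB hj)

theorem prod_dep (E : ι → ι → Prop) (F : (i : ι) → (∀ j, S j) → ℝ)
    (hloc : ∀ i v w, (∀ j, E j i → v j = w j) → v i = w i → F i v = F i w)
    (B A : Finset ι) (h : ∀ i ∈ B, i ∈ A ∧ ∀ j, E j i → j ∈ A) :
    Dep (fun u => ∏ i ∈ B, F i u) A := by
  intro u w hu
  refine Finset.prod_congr rfl fun i hi => ?_
  exact hloc i u w (fun j hj => hu j ((h i hi).2 j hj)) (hu i (h i hi).1)

theorem exists_sink (E : ι → ι → Prop) (hacyc : ∀ i, ¬ Relation.TransGen E i i)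
    (B : Finset ι) (hB : B.Nonempty) : ∃ m ∈ B, ∀ j ∈ B, ¬ E m j := by
  haveI : IsTrans ι (fun a b => Relation.TransGen E b a) :=
    ⟨fun a b c h1 h2 => Relation.TransGen.trans h2 h1⟩
  haveI : IsIrrefl ι (fun a b => Relation.TransGen E b a) := ⟨fun a => hacyc a⟩
  obtain ⟨m, hm, hmin⟩ :=
    (Finite.wellFounded_of_trans_of_irrefl (fun a b => Relation.TransGen E b a)).has_min
      (↑B : Set ι) (by exact_mod_cast hB)
  exact ⟨m, hm, fun j hj hE => hmin j hj (Relation.TransGen.single hE)⟩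

theorem wf_transGen (E : ι → ι → Prop) (hacyc : ∀ i, ¬ Relation.TransGen E i i) :
    WellFounded (Relation.TransGen E) := by
  haveI : IsTrans ι (Relation.TransGen E) := ⟨fun a b c h1 h2 => Relation.TransGen.trans h1 h2⟩
  haveI : IsIrrefl ι (Relation.TransGen E) := ⟨fun a => hacyc a⟩
  exact Finite.wellFounded_of_trans_of_irrefl _

theorem sum_update_eq (m : ι) (vm : S m) (G : (∀ i, S i) → ℝ) :
    ∑ u : ∀ i, S i, G u
      = ∑ u : ∀ i, S i, if u m = vm then ∑ x : S m, G (Function.update u m x) else 0 := by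
  have h1 : ∀ x : S m,
      (∑ u : ∀ i, S i, if u m = vm then G (Function.update u m x) else 0)
        = ∑ w : ∀ i, S i, if w m = x then G w else 0 := by
    intro x
    rw [← Finset.sum_filter, ← Finset.sum_filter]
    refine Finset.sum_nbij' (fun u => Function.update u m x)
      (fun w => Function.update w m vm) ?_ ?_ ?_ ?_ ?_
    · intro a ha; simp
    · intro a ha; simp
    · intro a ha
      simp only [Finset.mem_filter] at ha
      rw [Function.update_idem, ← ha.2, Function.update_eq_self]
    · intro a ha
      simp only [Finset.mem_filter] at ha
      rw [Function.update_idem, ← ha.2, Function.update_eq_self]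
    · intro a ha; rfl
  calc ∑ u : ∀ i, S i, G u
      = ∑ w : ∀ i, S i, ∑ x : S m, if w m = x then G w else 0 := by
        refine Finset.sum_congr rfl fun w _ => ?_
        rw [Finset.sum_ite_eq Finset.univ (w m) (fun _ => G w), if_pos (Finset.mem_univ _)]
    _ = ∑ x : S m, ∑ w : ∀ i, S i, if w m = x then G w else 0 := Finset.sum_comm
    _ = ∑ x : S m, ∑ u : ∀ i, S i, if u m = vm then G (Function.update u m x) else 0 := by
        refine Finset.sum_congr rfl fun x _ => (h1 x).symm
    _ = ∑ u : ∀ i, S i, ∑ x : S m, if u m = vm then G (Function.update u m x) else 0 :=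
        Finset.sum_comm
    _ = ∑ u : ∀ i, S i, if u m = vm then ∑ x : S m, G (Function.update u m x) else 0 := by
        refine Finset.sum_congr rfl fun u _ => ?_
        split_ifs
        · rfl
        · exact Finset.sum_const_zero


theorem elim_sum (E : ι → ι → Prop) (hacyc : ∀ i, ¬ Relation.TransGen E i i)
    (F : (i : ι) → (∀ j, S j) → ℝ)
    (hloc : ∀ i v w, (∀ j, E j i → v j = w j) → v i = w i → F i v = F i w)
    (hsum : ∀ i v, ∑ x : S i, F i (Function.update v i x) = 1) :
    ∀ (n : ℕ) (B C : Finset ι), B.card = n → Disjoint B C →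
      ∀ (H : (∀ i, S i) → ℝ), Dep H Bᶜ → ∀ v : ∀ i, S i,
      (∑ u : ∀ i, S i, if (∀ j ∈ C, u j = v j) then H u * ∏ i ∈ B, F i u else 0)
        = ∑ u : ∀ i, S i, if (∀ j ∈ C ∪ B, u j = v j) then H u else 0 := by
  intro n
  induction n with
  | zero =>
    intro B C hcard _ H _ v
    rw [Finset.card_eq_zero] at hcard
    subst hcard
    simp only [Finset.prod_empty, mul_one, Finset.union_empty]
  | succ n ih =>
    intro B C hcard hdisj H hH v
    have hBne : B.Nonempty := Finset.card_pos.1 (by omega)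
    obtain ⟨m, hmB, hsink⟩ := exists_sink E hacyc B hBne
    have hmC : m ∉ C := fun hmC => (Finset.disjoint_left.1 hdisj hmB) hmC
    set B' := B.erase m with hB'
    rw [sum_update_eq m (v m)
      (fun u => if (∀ j ∈ C, u j = v j) then H u * ∏ i ∈ B, F i u else 0)]
    have step : ∀ u : ∀ i, S i,
        (∑ x : S m, if (∀ j ∈ C, Function.update u m x j = v j)
            then H (Function.update u m x) * ∏ i ∈ B, F i (Function.update u m x) else 0)
        = if (∀ j ∈ C, u j = v j) then H u * ∏ i ∈ B', F i u else 0 := by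
      intro u
      have hcond : ∀ x : S m,
          ((∀ j ∈ C, Function.update u m x j = v j) ↔ (∀ j ∈ C, u j = v j)) := by
        intro x
        constructor <;> intro h j hj
        · have := h j hj
          rwa [Function.update_of_ne (by rintro rfl; exact hmC hj)] at this
        · rw [Function.update_of_ne (by rintro rfl; exact hmC hj)]
          exact h j hj
      have hHu : ∀ x : S m, H (Function.update u m x) = H u := by
        intro x
        refine hH _ _ fun j hj => ?_
        have hjm : j ≠ m := by
          intro he; subst he; simp [Finset.mem_compl] at hj; exact hj hmB
        exact Function.update_of_ne hjm _ _
      have hprod : ∀ x : S m,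
          (∏ i ∈ B', F i (Function.update u m x)) = ∏ i ∈ B', F i u := by
        intro x
        refine Finset.prod_congr rfl fun i hi => ?_
        have him : i ≠ m := Finset.ne_of_mem_erase hi
        have hiB : i ∈ B := Finset.mem_of_mem_erase hi
        refine hloc i _ _ (fun j hj => ?_) (Function.update_of_ne him _ _)
        have hjm : j ≠ m := fun he => hsink i hiB (he ▸ hj)
        exact Function.update_of_ne hjm _ _
      have hfac : ∀ x : S m,
          (∏ i ∈ B, F i (Function.update u m x))
            = F m (Function.update u m x) * ∏ i ∈ B', F i u := by
        intro x
        rw [← Finset.mul_prod_erase B _ hmB, hprod x]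
      by_cases hC : ∀ j ∈ C, u j = v j
      · rw [if_pos hC]
        have : ∀ x : S m,
            (if (∀ j ∈ C, Function.update u m x j = v j)
              then H (Function.update u m x) * ∏ i ∈ B, F i (Function.update u m x) else 0)
            = (H u * ∏ i ∈ B', F i u) * F m (Function.update u m x) := by
          intro x
          rw [if_pos ((hcond x).2 hC), hHu x, hfac x]
          ring
        rw [Finset.sum_congr rfl (fun x _ => this x), ← Finset.mul_sum, hsum m u, mul_one]
      · rw [if_neg hC]
        refine Finset.sum_eq_zero fun x _ => ?_
        rw [if_neg (fun h => hC ((hcond x).1 h))]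
    have step2 : (∑ u : ∀ i, S i, if u m = v m then
          (∑ x : S m, if (∀ j ∈ C, Function.update u m x j = v j)
            then H (Function.update u m x) * ∏ i ∈ B, F i (Function.update u m x) else 0) else 0)
        = ∑ u : ∀ i, S i, if (∀ j ∈ insert m C, u j = v j)
            then H u * ∏ i ∈ B', F i u else 0 := by
      refine Finset.sum_congr rfl fun u _ => ?_
      rw [step u]
      by_cases hm : u m = v m
      · rw [if_pos hm]
        refine if_congr ?_ rfl rfl
        rw [Finset.forall_mem_insert]
        exact ⟨fun h => ⟨hm, h⟩, fun h => h.2⟩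
      · rw [if_neg hm, if_neg (fun h => hm (h m (Finset.mem_insert_self m C)))]
    rw [step2]
    have hcard' : B'.card = n := by
      rw [hB', Finset.card_erase_of_mem hmB, hcard]
      omega
    have hdisj' : Disjoint B' (insert m C) := by
      rw [Finset.disjoint_insert_right]
      exact ⟨Finset.notMem_erase m B, Finset.disjoint_of_subset_left (Finset.erase_subset m B) hdisj⟩
    have hH' : Dep H B'ᶜ := hH.mono (Finset.compl_subset_compl.2 (Finset.erase_subset m B))
    have hset : insert m C ∪ B' = C ∪ B := by
      ext j
      simp only [Finset.mem_union, Finset.mem_insert, hB', Finset.mem_erase]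
      by_cases hjm : j = m
      · subst hjm; simp [hmB]
      · tauto
    rw [ih B' (insert m C) hcard' hdisj' H hH' v, hset]


theorem split_sum (T SL SR : Finset ι)
    (hLR : Disjoint SL SR) (hTL : Disjoint T SL) (hTR : Disjoint T SR)
    (hcov : ∀ j, j ∈ T ∨ j ∈ SL ∨ j ∈ SR)
    (φ ψ : (∀ i, S i) → ℝ) (hφ : Dep φ (T ∪ SL)) (hψ : Dep ψ (T ∪ SR)) (v : ∀ i, S i) :
    (∑ u : ∀ i, S i, if (∀ j ∈ T, u j = v j) then φ u * ψ u else 0)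
      = (∑ u : ∀ i, S i, if (∀ j ∈ T ∪ SR, u j = v j) then φ u else 0)
        * (∑ u : ∀ i, S i, if (∀ j ∈ T ∪ SL, u j = v j) then ψ u else 0) := by
  have hTnL : ∀ j, j ∈ T → j ∉ SL := fun j hj => Finset.disjoint_left.1 hTL hj
  have hTnR : ∀ j, j ∈ T → j ∉ SR := fun j hj => Finset.disjoint_left.1 hTR hj
  have hLnR : ∀ j, j ∈ SL → j ∉ SR := fun j hj => Finset.disjoint_left.1 hLR hj
  rw [← Finset.sum_filter, ← Finset.sum_filter, ← Finset.sum_filter]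
  rw [Finset.sum_mul_sum, ← Finset.sum_product']
  refine (Finset.sum_nbij'
    (i := fun p : ((∀ i, S i) × (∀ i, S i)) => (fun j => if j ∈ SL then p.1 j else p.2 j : ∀ i, S i))
    (j := fun t => ((fun j => if j ∈ SL then t j else v j : ∀ i, S i),
                    (fun j => if j ∈ SR then t j else v j : ∀ i, S i)))
    ?_ ?_ ?_ ?_ ?_).symm
  · intro p hp
    simp only [Finset.mem_product, Finset.mem_filter, Finset.mem_univ, true_and] at hp
    simp only [Finset.mem_filter, Finset.mem_univ, true_and]
    intro j hj
    rw [if_neg (hTnL j hj)]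
    exact hp.2 j (Finset.mem_union_left _ hj)
  · intro t ht
    simp only [Finset.mem_filter, Finset.mem_univ, true_and] at ht
    simp only [Finset.mem_product, Finset.mem_filter, Finset.mem_univ, true_and]
    constructor
    · intro j hj
      have : j ∉ SL := by
        rcases Finset.mem_union.1 hj with h | h
        · exact hTnL j h
        · exact fun h' => hLnR j h' h
      rw [if_neg this]
    · intro j hj
      have : j ∉ SR := by
        rcases Finset.mem_union.1 hj with h | h
        · exact hTnR j h
        · exact hLnR j h
      rw [if_neg this]
  · intro p hp
    simp only [Finset.mem_product, Finset.mem_filter, Finset.mem_univ, true_and] at hp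
    refine Prod.ext (funext fun j => ?_) (funext fun j => ?_) <;> dsimp only
    · by_cases hjL : j ∈ SL
      · rw [if_pos hjL, if_pos hjL]
      · rw [if_neg hjL]
        have hj : j ∈ T ∪ SR := by
          rcases hcov j with h | h | h
          · exact Finset.mem_union_left _ h
          · exact absurd h hjL
          · exact Finset.mem_union_right _ h
        exact (hp.1 j hj).symm
    · by_cases hjR : j ∈ SR
      · rw [if_pos hjR, if_neg (fun h => hLnR j h hjR)]
      · rw [if_neg hjR]
        have hj : j ∈ T ∪ SL := by
          rcases hcov j with h | h | h
          · exact Finset.mem_union_left _ h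
          · exact Finset.mem_union_right _ h
          · exact absurd h hjR
        exact (hp.2 j hj).symm
  · intro t ht
    simp only [Finset.mem_filter, Finset.mem_univ, true_and] at ht
    funext j
    dsimp only
    by_cases hjL : j ∈ SL
    · rw [if_pos hjL, if_pos hjL]
    · rw [if_neg hjL]
      by_cases hjR : j ∈ SR
      · rw [if_pos hjR]
      · rw [if_neg hjR]
        have hjT : j ∈ T := by
          rcases hcov j with h | h | h
          · exact h
          · exact absurd h hjL
          · exact absurd h hjR
        exact (ht j hjT).symm
  · intro p hp
    simp only [Finset.mem_product, Finset.mem_filter, Finset.mem_univ, true_and] at hp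
    congr 1
    · refine hφ _ _ fun j hj => ?_
      rcases Finset.mem_union.1 hj with h | h
      · rw [if_neg (hTnL j h)]
        exact (hp.1 j (Finset.mem_union_left _ h)).trans (hp.2 j (Finset.mem_union_left _ h)).symm
      · rw [if_pos h]
    · refine hψ _ _ fun j hj => ?_
      rcases Finset.mem_union.1 hj with h | h
      · rw [if_neg (hTnL j h)]
      · rw [if_neg (fun h' => hLnR j h' h)]

end SumLemmas

section Graph
variable {ι : Type*}

theorem walk_down (E : ι → ι → Prop) (Z' : Set ι) {x i t : ι}
    (h : Act E Z' x true i) (hit : Relation.ReflTransGen E i t)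
    (hno : ∀ w, Relation.ReflTransGen E i w → w ∉ Z') :
    t = i ∨ Act E Z' x true t := by
  induction hit with
  | refl => exact Or.inl rfl
  | tail hb hbc ih =>
    right
    rcases ih with rfl | w
    · exact Act.step_out h hbc (hno _ Relation.ReflTransGen.refl)
    · exact Act.step_out w hbc (hno _ hb)

theorem walk_up (E : ι → ι → Prop) (Z' : Set ι) {p t : ι}
    (hpt : Relation.ReflTransGen E p t) :
    (∀ w, Relation.ReflTransGen E p w → w ∉ Z') → (p = t ∨ Act E Z' t false p) := by
  induction hpt using Relation.ReflTransGen.head_induction_on with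
  | refl => exact fun _ => Or.inl rfl
  | head hac hcb ih =>
    intro hno
    rcases ih (fun w hw => hno w (Relation.ReflTransGen.head hac hw)) with rfl | w
    · exact Or.inr (Act.outof hac)
    · refine Or.inr (Act.step_in w hac (fun h => by cases h) ?_)
      exact fun _ => hno _ (Relation.ReflTransGen.single hac)

theorem key_reach (E : ι → ι → Prop) (Z' : Set ι) (X Y : Set ι)
    (hsep : DSep E Z' X Y)
    {i j k t : ι}
    (ht : t ∈ X ∨ t ∈ Y ∨ t ∈ Z') (hit : Relation.ReflTransGen E i t)
    (hk : k = i ∨ E k i)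
    (hkR : k ∈ X ∨ ∃ x ∈ X, ∃ d, Act E Z' x d k) (hkZ : k ∉ Z')
    (hj : j = i ∨ E j i) :
    j ∈ Z' ∨ j ∈ X ∨ ∃ x ∈ X, ∃ d, Act E Z' x d j := by
  by_cases hjZ : j ∈ Z'
  · exact Or.inl hjZ
  right
  by_contra hcon
  push_neg at hcon
  obtain ⟨hjX, hjR⟩ := hcon
  have hiR : i ∈ X ∨ ∃ x ∈ X, ∃ d, Act E Z' x d i := by
    rcases hk with rfl | hEki
    · exact hkR
    · rcases hkR with hkX | ⟨x, hx, d, w⟩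
      · exact Or.inr ⟨k, hkX, true, Act.into hEki⟩
      · exact Or.inr ⟨x, hx, true, Act.step_out w hEki hkZ⟩
  rcases hj with rfl | hEji
  · rcases hiR with hiX | ⟨x, hx, d, w⟩
    · exact hjX hiX
    · exact hjR x hx d w
  have hX_i : i ∈ X → False := fun hiX => hjR i hiX false (Act.outof hEji)
  have collider : ∀ x, x ∈ X → Act E Z' x true i → False := by
    intro x hx w
    by_cases hdesc : ∃ z, Relation.ReflTransGen E i z ∧ z ∈ Z'
    · exact hjR x hx false (Act.step_in w hEji (fun _ => hdesc) (fun h => by cases h))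
    · rw [not_exists] at hdesc
      have hno : ∀ z, Relation.ReflTransGen E i z → z ∉ Z' :=
        fun z hz hzZ => hdesc z ⟨hz, hzZ⟩
      have htZ : t ∉ Z' := hno t hit
      have htXY : t ∈ X ∨ t ∈ Y := by
        rcases ht with h | h | h
        · exact Or.inl h
        · exact Or.inr h
        · exact absurd h htZ
      rcases walk_down E Z' w hit hno with rfl | wt
      · rcases htXY with hiX | hiY
        · exact hX_i hiX
        · exact hsep x hx t hiY ⟨true, w⟩
      · rcases htXY with htX | htY
        · rcases walk_up E Z' hit hno with rfl | wi
          · exact hX_i htX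
          · exact hjR t htX false
              (Act.step_in wi hEji (fun h => by cases h)
                (fun _ => hno i Relation.ReflTransGen.refl))
        · exact hsep x hx t htY ⟨true, wt⟩
  rcases hk with rfl | hEki
  · rcases hiR with hiX | ⟨x, hx, d, w⟩
    · exact hX_i hiX
    · cases d with
      | false =>
        exact hjR x hx false (Act.step_in w hEji (fun h => by cases h) (fun _ => hkZ))
      | true => exact collider x hx w
  · rcases hkR with hkX | ⟨x, hx, d, w⟩
    · exact collider k hkX (Act.into hEki)
    · exact collider x hx (Act.step_out w hEki hkZ)

theorem fclosure_subset (E : ι → ι → Prop) (W Z : Set ι) : Z ⊆ fclosure E W Z :=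
  fun z hz => Set.mem_sInter.2 fun _ hC => hC.1 hz

theorem fclosure_closed (E : ι → ι → Prop) (W Z : Set ι) {w : ι} (hw : w ∈ W)
    (hp : ∀ p, E p w → p ∈ fclosure E W Z) : w ∈ fclosure E W Z :=
  Set.mem_sInter.2 fun C hC => hC.2 w hw fun p hpw => Set.mem_sInter.1 (hp p hpw) C hC

theorem fclosure_cases (E : ι → ι → Prop) (W Z : Set ι) {i : ι} (hi : i ∈ fclosure E W Z) :
    i ∈ Z ∨ (i ∈ W ∧ ∀ p, E p i → p ∈ fclosure E W Z) := by
  have hC : (fclosure E W Z) ⊆ {a | a ∈ Z ∨ (a ∈ W ∧ ∀ p, E p a → p ∈ fclosure E W Z)} := by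
    intro a ha
    refine Set.mem_sInter.1 ha _ ⟨fun z hz => Or.inl hz, ?_⟩
    intro w hw hp
    refine Or.inr ⟨hw, fun p hpw => ?_⟩
    rcases hp p hpw with hpZ | ⟨hpW, hpp⟩
    · exact fclosure_subset E W Z hpZ
    · exact fclosure_closed E W Z hpW hpp
  exact hC hi

end Graph

section Det
variable {ι : Type*} [DecidableEq ι] {S : ι → Type*} [∀ i, Fintype (S i)]

noncomputable def pick (F : (i : ι) → (∀ j, S j) → ℝ) (i : ι) (u : ∀ j, S j) : S i :=
  if h : ∃ x, F i (Function.update u i x) = 1 then h.choose else u i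

theorem pick_spec (F : (i : ι) → (∀ j, S j) → ℝ) (i : ι) (u : ∀ j, S j)
    (h : ∃ x, F i (Function.update u i x) = 1) :
    F i (Function.update u i (pick F i u)) = 1 := by
  rw [pick, dif_pos h]; exact h.choose_spec

theorem val_unique (F : (i : ι) → (∀ j, S j) → ℝ)
    (hnn : ∀ i v, 0 ≤ F i v) (hsum : ∀ i v, ∑ x : S i, F i (Function.update v i x) = 1)
    (i : ι) (u : ∀ j, S j) {x y : S i}
    (hx : F i (Function.update u i x) = 1) (hy : F i (Function.update u i y) = 1) : x = y := by
  by_contra hxy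
  have hle := Finset.sum_le_sum_of_subset_of_nonneg
    (Finset.subset_univ ({x, y} : Finset (S i)))
    (fun z _ _ => hnn i (Function.update u i z))
  rw [Finset.sum_pair hxy, hx, hy, hsum i u] at hle
  linarith

theorem exists_one (F : (i : ι) → (∀ j, S j) → ℝ)
    (hsum : ∀ i v, ∑ x : S i, F i (Function.update v i x) = 1)
    (i : ι) (hfunc : ∀ v, F i v = 0 ∨ F i v = 1) (u : ∀ j, S j) :
    ∃ x, F i (Function.update u i x) = 1 := by
  by_contra h
  push_neg at h
  have : ∑ x : S i, F i (Function.update u i x) = 0 :=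
    Finset.sum_eq_zero fun x _ =>
      (hfunc (Function.update u i x)).resolve_right (h x)
  rw [hsum i u] at this
  norm_num at this

noncomputable def detExt (E : ι → ι → Prop) (hwf : WellFounded (Relation.TransGen E))
    (F : (i : ι) → (∀ j, S j) → ℝ) (D : Set ι) (v : ∀ i, S i) : ∀ i, S i :=
  hwf.fix (C := fun i => S i)
    (fun i rec =>
      if i ∈ D then
        pick F i (fun j => if h : Relation.TransGen E j i then rec j h else v j)
      else v i)

theorem detExt_eq (E : ι → ι → Prop) (hwf : WellFounded (Relation.TransGen E))
    (F : (i : ι) → (∀ j, S j) → ℝ) (D : Set ι) (v : ∀ i, S i) (i : ι) :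
    detExt E hwf F D v i
      = if i ∈ D then
          pick F i (fun j => if _ : Relation.TransGen E j i then detExt E hwf F D v j else v j)
        else v i := by
  rw [detExt, WellFounded.fix_eq]

theorem detExt_not_mem (E : ι → ι → Prop) (hwf : WellFounded (Relation.TransGen E))
    (F : (i : ι) → (∀ j, S j) → ℝ) (D : Set ι) (v : ∀ i, S i) {i : ι} (hi : i ∉ D) :
    detExt E hwf F D v i = v i := by
  rw [detExt_eq, if_neg hi]

theorem detExt_consistent (E : ι → ι → Prop) (hwf : WellFounded (Relation.TransGen E))
    (F : (i : ι) → (∀ j, S j) → ℝ)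
    (hnn : ∀ i v, 0 ≤ F i v) (hsum : ∀ i v, ∑ x : S i, F i (Function.update v i x) = 1)
    (W D : Set ι) (hDW : ∀ i ∈ D, i ∈ W)
    (hWfunc : ∀ w ∈ W, ∀ v, F w v = 0 ∨ F w v = 1)
    (u : ∀ i, S i) (hu : ∀ i, F i u ≠ 0) :
    ∀ i, detExt E hwf F D u i = u i := by
  intro i
  refine hwf.induction (C := fun i => detExt E hwf F D u i = u i) i fun i ih => ?_
  show detExt E hwf F D u i = u i
  by_cases hiD : i ∈ D
  · rw [detExt_eq, if_pos hiD]
    have hwu : (fun j => if _ : Relation.TransGen E j i then detExt E hwf F D u j else u j)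
        = u := by
      funext j
      split
      · next h =>
        by_cases hjD : j ∈ D
        · exact ih j h
        · exact detExt_not_mem E hwf F D u hjD
      · rfl
    rw [hwu]
    have h1 : F i (Function.update u i (u i)) = 1 := by
      rw [Function.update_eq_self]
      exact (hWfunc i (hDW i hiD) u).resolve_left (hu i)
    exact val_unique F hnn hsum i u (pick_spec F i u ⟨u i, h1⟩) h1
  · rw [detExt_eq, if_neg hiD]

theorem detExt_congr (E : ι → ι → Prop) (hwf : WellFounded (Relation.TransGen E))
    (F : (i : ι) → (∀ j, S j) → ℝ)
    (hloc : ∀ i v w, (∀ j, E j i → v j = w j) → v i = w i → F i v = F i w)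
    (hnn : ∀ i v, 0 ≤ F i v) (hsum : ∀ i v, ∑ x : S i, F i (Function.update v i x) = 1)
    (W D ZS : Set ι) (hDW : ∀ i ∈ D, i ∈ W)
    (hWfunc : ∀ w ∈ W, ∀ v, F w v = 0 ∨ F w v = 1)
    (hpar : ∀ i ∈ D, ∀ p, E p i → p ∈ ZS ∪ D)
    (u u' : ∀ i, S i) (huu : ∀ j ∈ ZS, u j = u' j) :
    ∀ i ∈ D, detExt E hwf F D u i = detExt E hwf F D u' i := by
  intro i
  refine hwf.induction
    (C := fun i => i ∈ D → detExt E hwf F D u i = detExt E hwf F D u' i) i fun i ih hiD => ?_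
  rw [detExt_eq, if_pos hiD, detExt_eq, if_pos hiD]
  set w : ∀ j, S j := fun j => if _ : Relation.TransGen E j i then detExt E hwf F D u j else u j
    with hw
  set w' : ∀ j, S j := fun j => if _ : Relation.TransGen E j i then detExt E hwf F D u' j else u' j
    with hw'
  have hpareq : ∀ j, E j i → w j = w' j := by
    intro j hj
    have htg : Relation.TransGen E j i := Relation.TransGen.single hj
    rw [hw, hw']
    simp only [dif_pos htg]
    by_cases hjD : j ∈ D
    · exact ih j htg hjD
    · have hjZ : j ∈ ZS := by
        rcases hpar i hiD j hj with h | h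
        · exact h
        · exact absurd h hjD
      rw [detExt_not_mem E hwf F D u hjD, detExt_not_mem E hwf F D u' hjD]
      exact huu j hjZ
  have hFeq : ∀ x : S i, F i (Function.update w i x) = F i (Function.update w' i x) := by
    intro x
    refine hloc i _ _ (fun j hj => ?_) (by rw [Function.update_self, Function.update_self])
    by_cases hji : j = i
    · subst hji; rw [Function.update_self, Function.update_self]
    · rw [Function.update_of_ne hji, Function.update_of_ne hji]
      exact hpareq j hj
  have hx : F i (Function.update w i (pick F i w)) = 1 :=
    pick_spec F i w (exists_one F hsum i (hWfunc i (hDW i hiD)) w)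
  have hy' : F i (Function.update w i (pick F i w')) = 1 :=
    (hFeq _).trans (pick_spec F i w' (exists_one F hsum i (hWfunc i (hDW i hiD)) w'))
  exact val_unique F hnn hsum i w hx hy'

end Det

section QCIsec
variable {ι : Type*} [Fintype ι] [DecidableEq ι] {S : ι → Type*} [∀ i, Fintype (S i)]

set_option maxHeartbeats 2000000 in
theorem qci (E : ι → ι → Prop) (hacyc : ∀ i, ¬ Relation.TransGen E i i)
    (F : (i : ι) → (∀ j, S j) → ℝ)
    (hloc : ∀ i v w, (∀ j, E j i → v j = w j) → v i = w i → F i v = F i w)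
    (hsum : ∀ i v, ∑ x : S i, F i (Function.update v i x) = 1)
    (X Y Q : Finset ι) (Z' : Set ι) (hQ : ∀ a, a ∈ Q ↔ a ∈ Z')
    (hXY : Disjoint X Y)
    (hsep : DSep E Z' (↑X : Set ι) (↑Y : Set ι)) (v : ∀ i, S i) :
    marg (fun u => ∏ i, F i u) (X ∪ Y ∪ Q) v * marg (fun u => ∏ i, F i u) Q v
      = marg (fun u => ∏ i, F i u) (X ∪ Q) v * marg (fun u => ∏ i, F i u) (Y ∪ Q) v := by
  classical
  obtain ⟨pAn, hpAn⟩ : ∃ p : ι → Prop, ∀ i,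
      p i ↔ (∃ t ∈ X ∪ Y ∪ Q, Relation.ReflTransGen E i t) := ⟨_, fun _ => Iff.rfl⟩
  set An : Finset ι := Finset.univ.filter pAn with hAn
  set NA : Finset ι := Finset.univ.filter (fun i => ¬ pAn i) with hNA
  obtain ⟨R, hR⟩ : ∃ p : ι → Prop, ∀ b,
      p b ↔ (b ∈ X ∨ ∃ x ∈ X, ∃ d, Act E Z' x d b) := ⟨_, fun _ => Iff.rfl⟩
  set SL : Finset ι := Finset.univ.filter (fun i => pAn i ∧ i ∉ X ∪ Y ∪ Q ∧ R i) with hSL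
  set SR : Finset ι := Finset.univ.filter (fun i => pAn i ∧ i ∉ X ∪ Y ∪ Q ∧ ¬ R i) with hSR
  obtain ⟨pL, hpL⟩ : ∃ p : ι → Prop, ∀ i,
      p i ↔ (((i ∈ X ∧ i ∉ Q) ∨ i ∈ SL) ∨ ∃ q, E q i ∧ ((q ∈ X ∧ q ∉ Q) ∨ q ∈ SL)) :=
    ⟨_, fun _ => Iff.rfl⟩
  set φ : (∀ i, S i) → ℝ := fun u => ∏ i ∈ An.filter pL, F i u with hφ
  set ψ : (∀ i, S i) → ℝ := fun u => ∏ i ∈ An.filter (fun i => ¬ pL i), F i u with hψ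
  set H : (∀ i, S i) → ℝ := fun u => ∏ i ∈ An, F i u with hH
  have hmemAn : ∀ i, i ∈ An ↔ pAn i := by intro i; rw [hAn]; simp
  have hmemNA : ∀ i, i ∈ NA ↔ ¬ pAn i := by intro i; rw [hNA]; simp
  have hmemSL : ∀ i, i ∈ SL ↔ pAn i ∧ i ∉ X ∪ Y ∪ Q ∧ R i := by intro i; rw [hSL]; simp
  have hmemSR : ∀ i, i ∈ SR ↔ pAn i ∧ i ∉ X ∪ Y ∪ Q ∧ ¬ R i := by intro i; rw [hSR]; simp
  have hTAn : ∀ i, i ∈ X ∪ Y ∪ Q → pAn i :=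
    fun i hi => (hpAn i).2 ⟨i, hi, Relation.ReflTransGen.refl⟩
  have hAncl : ∀ i, pAn i → ∀ j, E j i → pAn j := by
    intro i hp j hj
    obtain ⟨t, ht, hw⟩ := (hpAn i).1 hp
    exact (hpAn j).2 ⟨t, ht, Relation.ReflTransGen.head hj hw⟩
  have hYR : ∀ b, b ∈ Y → R b → False := by
    intro b hb hRb
    rcases (hR b).1 hRb with hbX | ⟨x, hx, d, w⟩
    · exact Finset.disjoint_left.1 hXY hbX hb
    · exact hsep x (Finset.mem_coe.2 hx) b (Finset.mem_coe.2 hb) ⟨d, w⟩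
  -- core combinatorial claims
  have claimL : ∀ i, pAn i → pL i → ∀ j, (j = i ∨ E j i) → j ∈ X ∪ Q ∪ SL := by
    intro i hAni hpLi j hj
    obtain ⟨k, hk, hkXQ⟩ : ∃ k, (k = i ∨ E k i) ∧ ((k ∈ X ∧ k ∉ Q) ∨ k ∈ SL) := by
      rcases (hpL i).1 hpLi with hk | ⟨p, hp, hpm⟩
      · exact ⟨i, Or.inl rfl, hk⟩
      · exact ⟨p, Or.inr hp, hpm⟩
    have hkR : k ∈ (↑X : Set ι) ∨ ∃ x ∈ (↑X : Set ι), ∃ d, Act E Z' x d k := by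
      rcases hkXQ with ⟨hkX, _⟩ | hkSL
      · exact Or.inl (Finset.mem_coe.2 hkX)
      · rcases (hR k).1 ((hmemSL k).1 hkSL).2.2 with hkX | ⟨x, hx, d, w⟩
        · exact Or.inl (Finset.mem_coe.2 hkX)
        · exact Or.inr ⟨x, Finset.mem_coe.2 hx, d, w⟩
    have hkZ : k ∉ Z' := by
      rcases hkXQ with ⟨_, hkQ⟩ | hkSL
      · exact fun h => hkQ ((hQ k).2 h)
      · exact fun h => ((hmemSL k).1 hkSL).2.1
          (Finset.mem_union_right _ ((hQ k).2 h))
    obtain ⟨t, htT, hit⟩ := (hpAn i).1 hAni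
    have ht' : t ∈ (↑X : Set ι) ∨ t ∈ (↑Y : Set ι) ∨ t ∈ Z' := by
      rcases Finset.mem_union.1 htT with h | h
      · rcases Finset.mem_union.1 h with h | h
        · exact Or.inl (Finset.mem_coe.2 h)
        · exact Or.inr (Or.inl (Finset.mem_coe.2 h))
      · exact Or.inr (Or.inr ((hQ t).1 h))
    have hkey := key_reach E Z' (↑X) (↑Y) hsep ht' hit hk hkR hkZ hj
    have hjAn : pAn j := by
      rcases hj with rfl | hj
      · exact (hpAn j).2 ⟨t, htT, hit⟩
      · exact hAncl i ((hpAn i).2 ⟨t, htT, hit⟩) j hj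
    rcases hkey with hjZ | hjX | hjW
    · exact Finset.mem_union_left _ (Finset.mem_union_right _ ((hQ j).2 hjZ))
    · exact Finset.mem_union_left _ (Finset.mem_union_left _ (Finset.mem_coe.1 hjX))
    · have hRj : R j := by
        obtain ⟨x, hx, d, w⟩ := hjW
        exact (hR j).2 (Or.inr ⟨x, Finset.mem_coe.1 hx, d, w⟩)
      by_cases hjT : j ∈ X ∪ Y ∪ Q
      · rcases Finset.mem_union.1 hjT with h | h
        · rcases Finset.mem_union.1 h with h | h
          · exact Finset.mem_union_left _ (Finset.mem_union_left _ h)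
          · exact absurd hRj (fun hr => hYR j h hr)
        · exact Finset.mem_union_left _ (Finset.mem_union_right _ h)
      · exact Finset.mem_union_right _ ((hmemSL j).2 ⟨hjAn, hjT, hRj⟩)
  have claimR : ∀ i, pAn i → ¬ pL i → ∀ j, (j = i ∨ E j i) → j ∈ Y ∪ Q ∪ SR := by
    intro i hAni hnpL j hj
    have hjn : ¬ ((j ∈ X ∧ j ∉ Q) ∨ j ∈ SL) := by
      intro h
      apply hnpL
      rcases hj with rfl | hj
      · exact (hpL j).2 (Or.inl h)
      · exact (hpL i).2 (Or.inr ⟨j, hj, h⟩)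
    have hjAn : pAn j := by
      rcases hj with rfl | hj
      · exact hAni
      · exact hAncl i hAni j hj
    by_cases hjQ : j ∈ Q
    · exact Finset.mem_union_left _ (Finset.mem_union_right _ hjQ)
    by_cases hjX : j ∈ X
    · exact absurd (Or.inl ⟨hjX, hjQ⟩) hjn
    by_cases hjT : j ∈ X ∪ Y ∪ Q
    · have hjY : j ∈ Y := by
        rcases Finset.mem_union.1 hjT with h | h
        · rcases Finset.mem_union.1 h with h | h
          · exact absurd h hjX
          · exact h
        · exact absurd h hjQ
      exact Finset.mem_union_left _ (Finset.mem_union_left _ hjY)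
    · have hnR : ¬ R j := fun hr => hjn (Or.inr ((hmemSL j).2 ⟨hjAn, hjT, hr⟩))
      exact Finset.mem_union_right _ ((hmemSR j).2 ⟨hjAn, hjT, hnR⟩)
  have hφdep : Dep φ (X ∪ Q ∪ SL) := by
    rw [hφ]
    refine prod_dep E F hloc _ _ fun i hi => ?_
    obtain ⟨hiAn, hipL⟩ := Finset.mem_filter.1 hi
    exact ⟨claimL i ((hmemAn i).1 hiAn) hipL i (Or.inl rfl),
      fun j hj => claimL i ((hmemAn i).1 hiAn) hipL j (Or.inr hj)⟩
  have hψdep : Dep ψ (Y ∪ Q ∪ SR) := by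
    rw [hψ]
    refine prod_dep E F hloc _ _ fun i hi => ?_
    obtain ⟨hiAn, hipL⟩ := Finset.mem_filter.1 hi
    exact ⟨claimR i ((hmemAn i).1 hiAn) hipL i (Or.inl rfl),
      fun j hj => claimR i ((hmemAn i).1 hiAn) hipL j (Or.inr hj)⟩
  have hHdep : Dep H An := by
    rw [hH]
    refine prod_dep E F hloc _ _ fun i hi => ?_
    exact ⟨hi, fun j hj => (hmemAn j).2 (hAncl i ((hmemAn i).1 hi) j hj)⟩
  have hHsplit : ∀ u, H u = φ u * ψ u := fun u =>
    (Finset.prod_filter_mul_prod_filter_not An pL _).symm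
  have hPsplit : ∀ u : ∀ i, S i, (∏ i, F i u) = H u * ∏ i ∈ NA, F i u := fun u =>
    (Finset.prod_filter_mul_prod_filter_not Finset.univ pAn _).symm
  have hAnNA : An ⊆ NAᶜ := by
    intro a ha
    rw [Finset.mem_compl, hmemNA]
    exact not_not_intro ((hmemAn a).1 ha)
  -- master step
  have main : ∀ C SL' SR' : Finset ι, Disjoint SL' SR' → Disjoint (C ∪ NA) SL' →
      Disjoint (C ∪ NA) SR' → (∀ j, j ∈ C ∪ NA ∨ j ∈ SL' ∨ j ∈ SR') → Disjoint NA C →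
      (X ∪ Q ∪ SL ⊆ (C ∪ NA) ∪ SL') → (Y ∪ Q ∪ SR ⊆ (C ∪ NA) ∪ SR') →
      marg (fun u => ∏ i, F i u) C v
        = (∑ u : ∀ i, S i, if (∀ j ∈ (C ∪ NA) ∪ SR', u j = v j) then φ u else 0)
          * (∑ u : ∀ i, S i, if (∀ j ∈ (C ∪ NA) ∪ SL', u j = v j) then ψ u else 0) := by
    intro C SL' SR' h1 h2 h3 h4 h5 h6 h7
    have step1 : marg (fun u => ∏ i, F i u) C v
        = ∑ u : ∀ i, S i, if (∀ j ∈ C ∪ NA, u j = v j) then H u else 0 := by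
      rw [marg]
      rw [Finset.sum_congr rfl fun u _ => if_congr Iff.rfl (hPsplit u) rfl]
      exact elim_sum E hacyc F hloc hsum NA.card NA C rfl h5 H (hHdep.mono hAnNA) v
    rw [step1,
      Finset.sum_congr rfl fun u _ => if_congr Iff.rfl (hHsplit u) rfl]
    exact split_sum (C ∪ NA) SL' SR' h1 h2 h3 h4 φ ψ (hφdep.mono h6) (hψdep.mono h7) v
  have q1 : ((X ∪ Q) ∪ NA) ∪ (SR ∪ (Y \ Q)) = ((X ∪ Y ∪ Q) ∪ NA) ∪ SR := by
    ext a
    simp only [Finset.mem_union, hmemSL, hmemSR, hmemNA, Finset.mem_sdiff]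
    by_cases hq : a ∈ Q <;> tauto
  have q2 : ((Y ∪ Q) ∪ NA) ∪ (SL ∪ (X \ Q)) = ((X ∪ Y ∪ Q) ∪ NA) ∪ SL := by
    ext a
    simp only [Finset.mem_union, hmemSL, hmemSR, hmemNA, Finset.mem_sdiff]
    by_cases hq : a ∈ Q <;> tauto
  have q3 : (Q ∪ NA) ∪ (SR ∪ (Y \ Q)) = ((Y ∪ Q) ∪ NA) ∪ SR := by
    ext a
    simp only [Finset.mem_union, hmemSL, hmemSR, hmemNA, Finset.mem_sdiff]
    by_cases hq : a ∈ Q <;> tauto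
  have q4 : (Q ∪ NA) ∪ (SL ∪ (X \ Q)) = ((X ∪ Q) ∪ NA) ∪ SL := by
    ext a
    simp only [Finset.mem_union, hmemSL, hmemSR, hmemNA, Finset.mem_sdiff]
    by_cases hq : a ∈ Q <;> tauto
  have e1 := main (X ∪ Y ∪ Q) SL SR (by
      rw [Finset.disjoint_left]
      intro a ha hb
      have hta := hTAn a
      have hxy : a ∈ X → a ∉ Y := fun h => Finset.disjoint_left.1 hXY h
      simp only [Finset.mem_union, hmemSL, hmemSR, hmemNA, Finset.mem_sdiff] at ha hb hta
      tauto) (by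
      rw [Finset.disjoint_left]
      intro a ha hb
      have hta := hTAn a
      have hxy : a ∈ X → a ∉ Y := fun h => Finset.disjoint_left.1 hXY h
      simp only [Finset.mem_union, hmemSL, hmemSR, hmemNA, Finset.mem_sdiff] at ha hb hta
      tauto) (by
      rw [Finset.disjoint_left]
      intro a ha hb
      have hta := hTAn a
      have hxy : a ∈ X → a ∉ Y := fun h => Finset.disjoint_left.1 hXY h
      simp only [Finset.mem_union, hmemSL, hmemSR, hmemNA, Finset.mem_sdiff] at ha hb hta
      tauto)
    (by
      intro j
      have hta := hTAn j
      simp only [Finset.mem_union, hmemSL, hmemSR, hmemNA, Finset.mem_sdiff] at hta ⊢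
      by_cases h1 : pAn j <;> by_cases h2 : R j <;> tauto) (by
      rw [Finset.disjoint_left]
      intro a ha hb
      have hta := hTAn a
      have hxy : a ∈ X → a ∉ Y := fun h => Finset.disjoint_left.1 hXY h
      simp only [Finset.mem_union, hmemSL, hmemSR, hmemNA, Finset.mem_sdiff] at ha hb hta
      tauto) (by
      intro a ha
      have hta := hTAn a
      simp only [Finset.mem_union, hmemSL, hmemSR, hmemNA, Finset.mem_sdiff] at ha hta ⊢
      tauto) (by
      intro a ha
      have hta := hTAn a
      simp only [Finset.mem_union, hmemSL, hmemSR, hmemNA, Finset.mem_sdiff] at ha hta ⊢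
      tauto)
  have e2 := main (X ∪ Q) SL (SR ∪ (Y \ Q)) (by
      rw [Finset.disjoint_left]
      intro a ha hb
      have hta := hTAn a
      have hxy : a ∈ X → a ∉ Y := fun h => Finset.disjoint_left.1 hXY h
      simp only [Finset.mem_union, hmemSL, hmemSR, hmemNA, Finset.mem_sdiff] at ha hb hta
      tauto) (by
      rw [Finset.disjoint_left]
      intro a ha hb
      have hta := hTAn a
      have hxy : a ∈ X → a ∉ Y := fun h => Finset.disjoint_left.1 hXY h
      simp only [Finset.mem_union, hmemSL, hmemSR, hmemNA, Finset.mem_sdiff] at ha hb hta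
      tauto) (by
      rw [Finset.disjoint_left]
      intro a ha hb
      have hta := hTAn a
      have hxy : a ∈ X → a ∉ Y := fun h => Finset.disjoint_left.1 hXY h
      simp only [Finset.mem_union, hmemSL, hmemSR, hmemNA, Finset.mem_sdiff] at ha hb hta
      tauto)
    (by
      intro j
      have hta := hTAn j
      simp only [Finset.mem_union, hmemSL, hmemSR, hmemNA, Finset.mem_sdiff] at hta ⊢
      by_cases h1 : pAn j <;> by_cases h2 : R j <;> tauto) (by
      rw [Finset.disjoint_left]
      intro a ha hb
      have hta := hTAn a
      have hxy : a ∈ X → a ∉ Y := fun h => Finset.disjoint_left.1 hXY h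
      simp only [Finset.mem_union, hmemSL, hmemSR, hmemNA, Finset.mem_sdiff] at ha hb hta
      tauto) (by
      intro a ha
      have hta := hTAn a
      simp only [Finset.mem_union, hmemSL, hmemSR, hmemNA, Finset.mem_sdiff] at ha hta ⊢
      tauto) (by
      intro a ha
      have hta := hTAn a
      simp only [Finset.mem_union, hmemSL, hmemSR, hmemNA, Finset.mem_sdiff] at ha hta ⊢
      tauto)
  have e3 := main (Y ∪ Q) (SL ∪ (X \ Q)) SR (by
      rw [Finset.disjoint_left]
      intro a ha hb
      have hta := hTAn a
      have hxy : a ∈ X → a ∉ Y := fun h => Finset.disjoint_left.1 hXY h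
      simp only [Finset.mem_union, hmemSL, hmemSR, hmemNA, Finset.mem_sdiff] at ha hb hta
      tauto) (by
      rw [Finset.disjoint_left]
      intro a ha hb
      have hta := hTAn a
      have hxy : a ∈ X → a ∉ Y := fun h => Finset.disjoint_left.1 hXY h
      simp only [Finset.mem_union, hmemSL, hmemSR, hmemNA, Finset.mem_sdiff] at ha hb hta
      tauto) (by
      rw [Finset.disjoint_left]
      intro a ha hb
      have hta := hTAn a
      have hxy : a ∈ X → a ∉ Y := fun h => Finset.disjoint_left.1 hXY h
      simp only [Finset.mem_union, hmemSL, hmemSR, hmemNA, Finset.mem_sdiff] at ha hb hta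
      tauto)
    (by
      intro j
      have hta := hTAn j
      simp only [Finset.mem_union, hmemSL, hmemSR, hmemNA, Finset.mem_sdiff] at hta ⊢
      by_cases h1 : pAn j <;> by_cases h2 : R j <;> tauto) (by
      rw [Finset.disjoint_left]
      intro a ha hb
      have hta := hTAn a
      have hxy : a ∈ X → a ∉ Y := fun h => Finset.disjoint_left.1 hXY h
      simp only [Finset.mem_union, hmemSL, hmemSR, hmemNA, Finset.mem_sdiff] at ha hb hta
      tauto) (by
      intro a ha
      have hta := hTAn a
      simp only [Finset.mem_union, hmemSL, hmemSR, hmemNA, Finset.mem_sdiff] at ha hta ⊢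
      tauto) (by
      intro a ha
      have hta := hTAn a
      simp only [Finset.mem_union, hmemSL, hmemSR, hmemNA, Finset.mem_sdiff] at ha hta ⊢
      tauto)
  have e4 := main Q (SL ∪ (X \ Q)) (SR ∪ (Y \ Q)) (by
      rw [Finset.disjoint_left]
      intro a ha hb
      have hta := hTAn a
      have hxy : a ∈ X → a ∉ Y := fun h => Finset.disjoint_left.1 hXY h
      simp only [Finset.mem_union, hmemSL, hmemSR, hmemNA, Finset.mem_sdiff] at ha hb hta
      tauto) (by
      rw [Finset.disjoint_left]
      intro a ha hb
      have hta := hTAn a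
      have hxy : a ∈ X → a ∉ Y := fun h => Finset.disjoint_left.1 hXY h
      simp only [Finset.mem_union, hmemSL, hmemSR, hmemNA, Finset.mem_sdiff] at ha hb hta
      tauto) (by
      rw [Finset.disjoint_left]
      intro a ha hb
      have hta := hTAn a
      have hxy : a ∈ X → a ∉ Y := fun h => Finset.disjoint_left.1 hXY h
      simp only [Finset.mem_union, hmemSL, hmemSR, hmemNA, Finset.mem_sdiff] at ha hb hta
      tauto)
    (by
      intro j
      have hta := hTAn j
      simp only [Finset.mem_union, hmemSL, hmemSR, hmemNA, Finset.mem_sdiff] at hta ⊢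
      by_cases h1 : pAn j <;> by_cases h2 : R j <;> tauto) (by
      rw [Finset.disjoint_left]
      intro a ha hb
      have hta := hTAn a
      have hxy : a ∈ X → a ∉ Y := fun h => Finset.disjoint_left.1 hXY h
      simp only [Finset.mem_union, hmemSL, hmemSR, hmemNA, Finset.mem_sdiff] at ha hb hta
      tauto) (by
      intro a ha
      have hta := hTAn a
      simp only [Finset.mem_union, hmemSL, hmemSR, hmemNA, Finset.mem_sdiff] at ha hta ⊢
      tauto) (by
      intro a ha
      have hta := hTAn a
      simp only [Finset.mem_union, hmemSL, hmemSR, hmemNA, Finset.mem_sdiff] at ha hta ⊢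
      tauto)
  rw [q1] at e2
  rw [q2] at e3
  rw [q3, q4] at e4
  rw [e1, e2, e3, e4]
  ring


end QCIsec

set_option maxHeartbeats 1000000 in
theorem funcDSep_sound
    {ι : Type*} [Fintype ι] [DecidableEq ι]
    {S : ι → Type*} [∀ i, Fintype (S i)] [∀ i, DecidableEq (S i)]
    (E : ι → ι → Prop)
    (hacyc : ∀ i, ¬ Relation.TransGen E i i)
    (F : (i : ι) → (∀ j, S j) → ℝ)
    (hloc : ∀ i v w, (∀ j, E j i → v j = w j) → v i = w i → F i v = F i w)
    (hnn : ∀ i v, 0 ≤ F i v)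
    (hsum : ∀ i v, ∑ x : S i, F i (Function.update v i x) = 1)
    (W : Set ι)
    (hWfunc : ∀ w ∈ W, ∀ v, F w v = 0 ∨ F w v = 1)
    (X Y Z : Finset ι)
    (hXY : Disjoint X Y) (hXZ : Disjoint X Z) (hYZ : Disjoint Y Z)
    (hsep : DSep E (fclosure E W (↑Z : Set ι)) (↑X : Set ι) (↑Y : Set ι)) :
    ∀ v : ∀ i, S i,
      marg (fun u => ∏ i, F i u) (X ∪ Y ∪ Z) v * marg (fun u => ∏ i, F i u) Z v
        = marg (fun u => ∏ i, F i u) (X ∪ Z) v * marg (fun u => ∏ i, F i u) (Y ∪ Z) v := by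
  intro v
  classical
  set Z' : Set ι := fclosure E W (↑Z : Set ι) with hZ'
  have hZfin : Z'.Finite := Set.toFinite _
  set Q : Finset ι := hZfin.toFinset with hQdef
  have hQ : ∀ a, a ∈ Q ↔ a ∈ Z' := fun a => Set.Finite.mem_toFinset _
  have hZQ : Z ⊆ Q := fun a ha => (hQ a).2 (fclosure_subset E W _ (Finset.mem_coe.2 ha))
  set D : Set ι := Z' \ (↑Z : Set ι) with hD
  have hDW : ∀ i ∈ D, i ∈ W := by
    rintro i ⟨hiZ', hiZ⟩
    rcases fclosure_cases E W _ hiZ' with h | h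
    · exact absurd h hiZ
    · exact h.1
  have hDpar : ∀ i ∈ D, ∀ p, E p i → p ∈ (↑Z : Set ι) ∪ D := by
    rintro i ⟨hiZ', hiZ⟩ p hp
    rcases fclosure_cases E W _ hiZ' with h | h
    · exact absurd h hiZ
    · have hpZ' := h.2 p hp
      by_cases hpZ : p ∈ (↑Z : Set ι)
      · exact Or.inl hpZ
      · exact Or.inr ⟨hpZ', hpZ⟩
  have hwf : WellFounded (Relation.TransGen E) := wf_transGen E hacyc
  set e := detExt E hwf F D with he
  set P : (∀ i, S i) → ℝ := fun u => ∏ i, F i u with hP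
  have hnz : ∀ u : ∀ i, S i, P u ≠ 0 → ∀ i, F i u ≠ 0 := by
    intro u hu i hi
    exact hu (Finset.prod_eq_zero (Finset.mem_univ i) hi)
  have hkey : ∀ u : ∀ i, S i, P u ≠ 0 → ∀ i ∈ D, u i = e u i := by
    intro u hu i hiD
    exact (detExt_consistent E hwf F hnn hsum W D hDW hWfunc u (hnz u hu) i).symm
  have hcongr : ∀ u w : ∀ i, S i, (∀ j ∈ Z, u j = w j) → ∀ i ∈ D, e u i = e w i := by
    intro u w huw
    exact detExt_congr E hwf F hloc hnn hsum W D (↑Z) hDW hWfunc hDpar u w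
      (fun j hj => huw j (Finset.mem_coe.1 hj))
  by_cases hc : ∀ i ∈ X ∪ Y, i ∈ Q → i ∉ Z → v i = e v i
  · set v' : ∀ i, S i := fun i => if i ∈ Q ∧ i ∉ Z then e v i else v i with hv'
    have transfer : ∀ A : Finset ι, (∀ i ∈ A, i ∈ Q → i ∉ Z → v i = e v i) →
        marg P (A ∪ Z) v = marg P (A ∪ Q) v' := by
      intro A hA
      rw [marg, marg]
      refine Finset.sum_congr rfl fun u _ => ?_
      by_cases hPu : P u = 0
      · rw [hPu]; simp
      · have hvA : ∀ j ∈ A, v' j = v j := by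
          intro j hjA
          rw [hv']; dsimp only
          split
          · next hcond => exact (hA j hjA hcond.1 hcond.2).symm
          · rfl
        refine ifeq ?_
        constructor
        · intro h1 j hj
          rcases Finset.mem_union.1 hj with hjA | hjQ
          · rw [hvA j hjA]
            exact h1 j (Finset.mem_union_left _ hjA)
          · by_cases hz : j ∈ Z
            · have : v' j = v j := by
                rw [hv']; dsimp only; rw [if_neg (fun h => h.2 hz)]
              rw [this]
              exact h1 j (Finset.mem_union_right _ hz)
            · have hjD : j ∈ D := ⟨(hQ j).1 hjQ, fun h => hz (Finset.mem_coe.1 h)⟩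
              have e1 : u j = e u j := hkey u hPu j hjD
              have e2 : e u j = e v j :=
                hcongr u v (fun k hk => h1 k (Finset.mem_union_right _ hk)) j hjD
              have e3 : v' j = e v j := by
                rw [hv']; dsimp only; rw [if_pos ⟨hjQ, hz⟩]
              rw [e3, ← e2, ← e1]
        · intro h2 j hj
          rcases Finset.mem_union.1 hj with hjA | hjZ
          · rw [← hvA j hjA]
            exact h2 j (Finset.mem_union_left _ hjA)
          · have : v' j = v j := by
              rw [hv']; dsimp only; rw [if_neg (fun h => h.2 hjZ)]
            rw [← this]
            exact h2 j (Finset.mem_union_right _ (hZQ hjZ))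
    have t1 := transfer (X ∪ Y) (fun i hi => hc i hi)
    have t2 := transfer X (fun i hi => hc i (Finset.mem_union_left _ hi))
    have t3 := transfer Y (fun i hi => hc i (Finset.mem_union_right _ hi))
    have t4 := transfer ∅ (fun i hi => absurd hi (Finset.notMem_empty i))
    rw [Finset.empty_union, Finset.empty_union] at t4
    rw [t1, t4, t2, t3]
    exact qci E hacyc F hloc hsum X Y Q Z' hQ hXY hsep v'
  · push_neg at hc
    obtain ⟨i, hiXY, hiQ, hiZ, hne⟩ := hc
    have hiD : i ∈ D := ⟨(hQ i).1 hiQ, fun h => hiZ (Finset.mem_coe.1 h)⟩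
    have hzero : ∀ A : Finset ι, i ∈ A → marg P (A ∪ Z) v = 0 := by
      intro A hiA
      rw [marg]
      refine Finset.sum_eq_zero fun u _ => ?_
      by_cases hcond : ∀ j ∈ A ∪ Z, u j = v j
      · rw [if_pos hcond]
        by_contra hPu
        have e1 : u i = e u i := hkey u hPu i hiD
        have e2 : e u i = e v i :=
          hcongr u v (fun k hk => hcond k (Finset.mem_union_right _ hk)) i hiD
        have e3 : u i = v i := hcond i (Finset.mem_union_left _ hiA)
        exact hne (by rw [← e3, e1, e2])
      · rw [if_neg hcond]
    rcases Finset.mem_union.1 hiXY with hiX | hiY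
    · rw [hzero (X ∪ Y) hiXY, hzero X hiX]; ring
    · rw [hzero (X ∪ Y) hiXY, hzero Y hiY]; ring
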